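/- Let T = (V, E) be a tree. Then LMC(T) (the convex hull of characteristic vectors of multicuts of the complete graph on V lifted from T) equals the convex hull of all x ∈ {0,1}^{binom(V,2)} satisfying: for all u,v ∈ V with d(u,v) ≥ 2, x_{uv} ≤ Σ_{e ∈ E_{uv}} x_e, and x_e ≤ x_{uv} for every edge e on the unique u–v path in T; here E_{uv} is the edge set of the unique u–v path in T and d(u,v) its length. -/

import Mathlib

open Finset

open scoped Classical

variable {V : Type*}

/-- A decomposition of a graph `G`: a partition of the node set all of whose blocks
induce connected subgraphs. -/
def IsDecomposition (G : SimpleGraph V) (P : Set (Set V)) : Prop :=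
  Setoid.IsPartition P ∧ ∀ U ∈ P, (G.induce U).Connected

/-- Two nodes lie in a common block of `P`. -/
def SameBlock (P : Set (Set V)) (u v : V) : Prop :=
  ∃ U ∈ P, u ∈ U ∧ v ∈ U

/-- The edge `e` straddles two distinct blocks of `P`. -/
def Crosses (P : Set (Set V)) (e : Sym2 V) : Prop :=
  ∃ u v, e = s(u, v) ∧ ¬ SameBlock P u v

/-- The multicut of `G` induced by a decomposition `P`. -/
def inducedMulticut (G : SimpleGraph V) (P : Set (Set V)) : Set (Sym2 V) :=
  {e | e ∈ G.edgeSet ∧ Crosses P e}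

/-- `M` is a multicut of `G`. -/
def IsMulticut (G : SimpleGraph V) (M : Set (Sym2 V)) : Prop :=
  ∃ P, IsDecomposition G P ∧ M = inducedMulticut G P

/-- The characteristic vector (in the ambient space `Sym2 V → ℝ`, with coordinates
outside the edge set of `H` pinned to `0`) of the multicut of `H` induced by `P`. -/
noncomputable def multicutVec (H : SimpleGraph V) (P : Set (Set V)) : Sym2 V → ℝ :=
  fun e => if e ∈ H.edgeSet ∧ Crosses P e then 1 else 0

/-- Characteristic vectors of multicuts of `H` lifted from `G`. -/
def liftedVectors (G H : SimpleGraph V) : Set (Sym2 V → ℝ) :=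
  {x | ∃ P, IsDecomposition G P ∧ x = multicutVec H P}

/-- The lifted multicut polytope with respect to `G` and `H`. -/
def LMC (G H : SimpleGraph V) : Set (Sym2 V → ℝ) :=
  convexHull ℝ (liftedVectors G H)

/-- The inequality `f x ≤ b` is valid for `P` and its equality set has affine dimension
`|E ∪ F| - 1`, i.e. one less than the dimension of the corresponding lifted multicut
polytope for the augmented graph `H`. -/
def DefinesFacet (H : SimpleGraph V) (P : Set (Sym2 V → ℝ))
    (f : (Sym2 V → ℝ) → ℝ) (b : ℝ) : Prop :=
  (∀ x ∈ P, f x ≤ b) ∧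
  Module.finrank ℝ (affineSpan ℝ {x | x ∈ P ∧ f x = b}).direction + 1 = Nat.card H.edgeSet

namespace LMCAux
open SimpleGraph

variable {V : Type*} {G : SimpleGraph V}

lemma path_unique (hT : G.IsTree) {u v : V} {p q : G.Walk u v}
    (hp : p.IsPath) (hq : q.IsPath) : p = q :=
  ((hT.existsUnique_path u v).unique hp hq)

lemma path_nil {u : V} {p : G.Walk u u} (hp : p.IsPath) : p = SimpleGraph.Walk.nil := by
  cases p with
  | nil => rfl
  | cons h q =>
    rw [SimpleGraph.Walk.cons_isPath_iff] at hp
    exact absurd (SimpleGraph.Walk.end_mem_support q) hp.2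

section xfacts
variable {x : Sym2 V → ℝ}
  (hx01 : ∀ e : Sym2 V, ¬ e.IsDiag → (x e = 0 ∨ x e = 1))
  (hxd : ∀ e : Sym2 V, e.IsDiag → x e = 0)
  (hineq : ∀ u v : V, u ≠ v → ¬ G.Adj u v → ∀ p : G.Walk u v, p.IsPath →
    (x s(u, v) ≤ ∑ e ∈ p.edges.toFinset, x e) ∧ (∀ e ∈ p.edges, x e ≤ x s(u, v)))

include hx01 in
lemma x_nonneg {e : Sym2 V} (he : ¬ e.IsDiag) : 0 ≤ x e := by
  rcases hx01 e he with h | h <;> simp [h]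

include hx01 in
lemma x_le_one {e : Sym2 V} (he : ¬ e.IsDiag) : x e ≤ 1 := by
  rcases hx01 e he with h | h <;> simp [h]

include hxd hineq in
lemma master (hT : G.IsTree) (u v : V) (p : G.Walk u v) (hp : p.IsPath) :
    (x s(u, v) ≤ ∑ e ∈ p.edges.toFinset, x e) ∧ (∀ e ∈ p.edges, x e ≤ x s(u, v)) := by
  by_cases huv : u = v
  · subst huv
    have hnil : p = SimpleGraph.Walk.nil := path_nil hp
    subst hnil
    have h0 : x s(u, u) = 0 := hxd _ (by simp)
    simp [h0]
  by_cases hadj : G.Adj u v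
  · have hq : (SimpleGraph.Walk.cons hadj SimpleGraph.Walk.nil).IsPath := by
      simp [hadj.ne]
    have hpq := path_unique hT hp hq
    subst hpq
    constructor
    · simp
    · intro e he
      simp at he
      simp [he]
  · exact hineq u v huv hadj p hp

include hx01 hxd hineq in
lemma edges_zero (hT : G.IsTree) {u v : V} {p : G.Walk u v} (hp : p.IsPath)
    (h0 : x s(u, v) = 0) : ∀ e ∈ p.edges, x e = 0 := by
  intro e he
  have hle := (master hxd hineq hT u v p hp).2 e he
  have hne : ¬ e.IsDiag := by
    induction e using Sym2.ind with
    | _ a b => simpa using (p.adj_of_mem_edges he).ne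
  exact le_antisymm (h0 ▸ hle) (x_nonneg hx01 hne)

include hx01 hxd hineq in
lemma x_zero_of_edges_zero (hT : G.IsTree) {u v : V} {p : G.Walk u v} (hp : p.IsPath)
    (h0 : ∀ e ∈ p.edges, x e = 0) : x s(u, v) = 0 := by
  by_cases huv : u = v
  · exact hxd _ (by simp [huv])
  have hle := (master hxd hineq hT u v p hp).1
  have hsum : ∑ e ∈ p.edges.toFinset, x e = 0 :=
    Finset.sum_eq_zero fun e he => h0 e (List.mem_toFinset.mp he)
  have := hsum ▸ hle
  exact le_antisymm this (x_nonneg hx01 (by simp [huv]))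

include hx01 hxd hineq in
lemma r_trans (hT : G.IsTree) {u v w : V} (h1 : x s(u, v) = 0) (h2 : x s(v, w) = 0) :
    x s(u, w) = 0 := by
  by_cases huw : u = w
  · exact hxd _ (by simp [huw])
  obtain ⟨p, hp⟩ := (hT.existsUnique_path u v).exists
  obtain ⟨q, hq⟩ := (hT.existsUnique_path v w).exists
  have hc : (p.append q).bypass.IsPath := SimpleGraph.Walk.bypass_isPath _
  refine x_zero_of_edges_zero hx01 hxd hineq hT hc ?_
  intro e he
  have := SimpleGraph.Walk.edges_bypass_subset _ he
  rw [SimpleGraph.Walk.edges_append, List.mem_append] at this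
  rcases this with h | h
  · exact edges_zero hx01 hxd hineq hT hp h1 e h
  · exact edges_zero hx01 hxd hineq hT hq h2 e h

end xfacts
end LMCAux

namespace LMCAux2
open LMCAux
open SimpleGraph

variable {V : Type*} {G : SimpleGraph V} {P : Set (Set V)}

lemma sameBlock_symm {u v : V} (h : SameBlock P u v) : SameBlock P v u := by
  obtain ⟨U, hU, hu, hv⟩ := h; exact ⟨U, hU, hv, hu⟩

lemma sameBlock_refl (hP : Setoid.IsPartition P) (u : V) : SameBlock P u u := by
  obtain ⟨U, ⟨hU, hu⟩, -⟩ := hP.2 u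
  exact ⟨U, hU, hu, hu⟩

lemma sameBlock_trans (hP : Setoid.IsPartition P) {u v w : V}
    (h1 : SameBlock P u v) (h2 : SameBlock P v w) : SameBlock P u w := by
  obtain ⟨U, hU, hu, hv⟩ := h1
  obtain ⟨W, hW, hv', hw⟩ := h2
  obtain ⟨B, -, hB⟩ := hP.2 v
  have : U = W := (hB U ⟨hU, hv⟩).trans (hB W ⟨hW, hv'⟩).symm
  exact ⟨U, hU, hu, this ▸ hw⟩

lemma crosses_iff (hP : Setoid.IsPartition P) (a b : V) :
    Crosses P s(a, b) ↔ ¬ SameBlock P a b := by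
  constructor
  · rintro ⟨u, v, heq, hn⟩ hs
    rw [Sym2.eq_iff] at heq
    rcases heq with ⟨rfl, rfl⟩ | ⟨rfl, rfl⟩
    · exact hn hs
    · exact hn (sameBlock_symm hs)
  · intro h; exact ⟨a, b, rfl, h⟩

/-- A walk whose support lies in `C` gives reachability in the induced graph. -/
lemma reachable_induce {C : Set V} :
    ∀ {a b : V} (p : G.Walk a b) (hs : ∀ z ∈ p.support, z ∈ C),
      (G.induce C).Reachable ⟨a, hs a p.start_mem_support⟩ ⟨b, hs b p.end_mem_support⟩ := by
  intro a b p
  induction p with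
  | nil => intro hs; rfl
  | cons h q ih =>
    intro hs
    have hs' : ∀ z ∈ q.support, z ∈ C := fun z hz => hs z (by simp [hz])
    have hadj : (G.induce C).Adj ⟨_, hs _ (SimpleGraph.Walk.start_mem_support _)⟩
        ⟨_, hs' _ q.start_mem_support⟩ := by
      simpa using h
    exact hadj.reachable.trans (ih hs')

/-- If u,v are in a common block, the unique path between them stays in that block. -/
lemma support_subset_block (hT : G.IsTree) (hD : IsDecomposition G P)
    {u v : V} {U : Set V} (hU : U ∈ P) (hu : u ∈ U) (hv : v ∈ U)
    {p : G.Walk u v} (hp : p.IsPath) : ∀ z ∈ p.support, z ∈ U := by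
  have hconn := hD.2 U hU
  obtain ⟨w⟩ := hconn ⟨u, hu⟩ ⟨v, hv⟩
  let w' : G.Walk u v := w.map (SimpleGraph.Embedding.induce U).toHom
  have hsup : ∀ z ∈ w'.support, z ∈ U := by
    intro z hz
    rw [show w'.support = w.support.map _ from SimpleGraph.Walk.support_map _ _, List.mem_map] at hz
    obtain ⟨⟨z', hz'⟩, -, rfl⟩ := hz
    exact hz'
  have heq : p = w'.bypass := LMCAux.path_unique hT hp (SimpleGraph.Walk.bypass_isPath _)
  intro z hz
  exact hsup z (SimpleGraph.Walk.support_bypass_subset _ (heq ▸ hz))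

lemma sameBlock_of_edge (hT : G.IsTree) (hD : IsDecomposition G P)
    {u v : V} (hsame : SameBlock P u v) {p : G.Walk u v} (hp : p.IsPath)
    {a b : V} (he : s(a, b) ∈ p.edges) : SameBlock P a b := by
  obtain ⟨U, hU, hu, hv⟩ := hsame
  have hs := support_subset_block hT hD hU hu hv hp
  exact ⟨U, hU, hs a (p.fst_mem_support_of_mem_edges he),
    hs b (p.snd_mem_support_of_mem_edges he)⟩

lemma exists_crossing_edge (hP : Setoid.IsPartition P) :
    ∀ {u v : V} (p : G.Walk u v), ¬ SameBlock P u v →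
      ∃ a b, s(a, b) ∈ p.edges ∧ ¬ SameBlock P a b := by
  intro u v p
  induction p with
  | nil => intro h; exact absurd (sameBlock_refl hP _) h
  | @cons u c v h q ih =>
    intro hn
    by_cases huc : SameBlock P u c
    · have : ¬ SameBlock P c v := fun hcv => hn (sameBlock_trans hP huc hcv)
      obtain ⟨a, b, hab, hnab⟩ := ih this
      exact ⟨a, b, by simp [hab], hnab⟩
    · exact ⟨u, c, by simp, huc⟩

end LMCAux2

namespace LMCAux3
open LMCAux LMCAux2 SimpleGraph

variable {V : Type*} {G : SimpleGraph V} {P : Set (Set V)}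

lemma multicutVec_nonneg (H : SimpleGraph V) (P : Set (Set V)) (e : Sym2 V) :
    0 ≤ multicutVec H P e := by
  unfold multicutVec; split <;> norm_num

lemma multicutVec_le_one (H : SimpleGraph V) (P : Set (Set V)) (e : Sym2 V) :
    multicutVec H P e ≤ 1 := by
  unfold multicutVec; split <;> norm_num

lemma multicutVec_top_eq_zero (hP : Setoid.IsPartition P) {a b : V}
    (hs : SameBlock P a b) : multicutVec (⊤ : SimpleGraph V) P s(a, b) = 0 := by
  unfold multicutVec
  rw [if_neg]
  rintro ⟨-, hc⟩
  exact (crosses_iff hP a b).mp hc hs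

lemma multicutVec_top_eq_one (hP : Setoid.IsPartition P) {a b : V} (hab : a ≠ b)
    (hs : ¬ SameBlock P a b) : multicutVec (⊤ : SimpleGraph V) P s(a, b) = 1 := by
  unfold multicutVec
  rw [if_pos]
  exact ⟨by simp [hab], (crosses_iff hP a b).mpr hs⟩

lemma sameBlock_classes (st : Setoid V) {u v : V} :
    SameBlock st.classes u v ↔ st u v := by
  constructor
  · rintro ⟨U, ⟨y, rfl⟩, hu, hv⟩
    exact st.trans' hu (st.symm' hv)
  · intro h
    exact ⟨{z | st z v}, ⟨v, rfl⟩, h, st.refl' v⟩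

end LMCAux3

theorem lmc_tree_eq_hull_path_cut
    {V : Type*} [Fintype V] (G : SimpleGraph V) (hT : G.IsTree) :
    LMC G ⊤ = convexHull ℝ {x : Sym2 V → ℝ |
      (∀ e : Sym2 V, ¬ e.IsDiag → (x e = 0 ∨ x e = 1)) ∧
      (∀ e : Sym2 V, e.IsDiag → x e = 0) ∧
      (∀ u v : V, u ≠ v → ¬ G.Adj u v → ∀ p : G.Walk u v, p.IsPath →
        (x s(u, v) ≤ ∑ e ∈ p.edges.toFinset, x e) ∧
        (∀ e ∈ p.edges, x e ≤ x s(u, v)))} := by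
  open LMCAux LMCAux2 LMCAux3 in
  unfold LMC
  congr 1
  ext x
  constructor
  · rintro ⟨P, hD, rfl⟩
    have hP := hD.1
    refine ⟨?_, ?_, ?_⟩
    · intro e he
      unfold multicutVec
      split
      · right; rfl
      · left; rfl
    · intro e he
      induction e using Sym2.ind with
      | _ a b =>
        rw [Sym2.mk_isDiag_iff] at he
        subst he
        unfold multicutVec
        rw [if_neg]
        rintro ⟨hmem, -⟩
        simp [SimpleGraph.mem_edgeSet] at hmem
    · intro u v huv hadj p hp
      by_cases hs : SameBlock P u v
      · rw [LMCAux3.multicutVec_top_eq_zero hP hs]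
        constructor
        · exact Finset.sum_nonneg fun e _ => LMCAux3.multicutVec_nonneg _ _ _
        · intro e he
          induction e using Sym2.ind with
          | _ a b =>
            have := LMCAux2.sameBlock_of_edge hT hD hs hp he
            rw [LMCAux3.multicutVec_top_eq_zero hP this]
      · rw [LMCAux3.multicutVec_top_eq_one hP huv hs]
        constructor
        · obtain ⟨a, b, hab, hnab⟩ := LMCAux2.exists_crossing_edge hP p hs
          have haneb : a ≠ b := (p.adj_of_mem_edges hab).ne
          calc (1 : ℝ) = multicutVec ⊤ P s(a, b) :=
                (LMCAux3.multicutVec_top_eq_one hP haneb hnab).symm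
            _ ≤ ∑ e ∈ p.edges.toFinset, multicutVec ⊤ P e :=
                Finset.single_le_sum (f := fun e => multicutVec ⊤ P e) (fun i _ => LMCAux3.multicutVec_nonneg _ _ _)
                  (List.mem_toFinset.mpr hab)
        · intro e he
          exact LMCAux3.multicutVec_le_one _ _ _
  · rintro ⟨hx01, hxd, hineq⟩
    have hrefl : ∀ u : V, x s(u, u) = 0 := fun u => hxd _ (by simp)
    have hsymm : ∀ {u v : V}, x s(u, v) = 0 → x s(v, u) = 0 := by
      intro u v h; rwa [Sym2.eq_swap] at h
    have htrans : ∀ {u v w : V}, x s(u, v) = 0 → x s(v, w) = 0 → x s(u, w) = 0 :=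
      fun h1 h2 => LMCAux.r_trans hx01 hxd hineq hT h1 h2
    set st : Setoid V := ⟨fun u v => x s(u, v) = 0,
      ⟨hrefl, fun h => hsymm h, fun h1 h2 => htrans h1 h2⟩⟩ with hst
    refine ⟨st.classes, ⟨Setoid.isPartition_classes st, ?_⟩, ?_⟩
    · rintro U ⟨y, rfl⟩
      have hyC : st y y := st.refl' y
      rw [SimpleGraph.connected_iff]
      refine ⟨?_, ⟨⟨y, hyC⟩⟩⟩
      rintro ⟨a, ha⟩ ⟨b, hb⟩
      -- ha : x s(a,y) = 0, hb : x s(b,y) = 0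
      have hab : x s(a, b) = 0 := htrans ha (hsymm hb)
      obtain ⟨p, hp⟩ := (hT.existsUnique_path a b).exists
      have hzero : ∀ e ∈ p.edges, x e = 0 :=
        LMCAux.edges_zero hx01 hxd hineq hT hp hab
      have hsupp : ∀ z ∈ p.support, z ∈ {z | st z y} := by
        intro z hz
        have hq : (p.takeUntil z hz).IsPath := hp.takeUntil hz
        have haz : x s(a, z) = 0 :=
          LMCAux.x_zero_of_edges_zero hx01 hxd hineq hT hq
            (fun e he => hzero e (p.edges_takeUntil_subset hz he))
        exact htrans (hsymm haz) ha
      exact LMCAux2.reachable_induce p hsupp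
    · funext e
      induction e using Sym2.ind with
      | _ a b =>
        by_cases hab : a = b
        · subst hab
          rw [hrefl a]
          exact (LMCAux3.multicutVec_top_eq_zero (Setoid.isPartition_classes st)
            ((LMCAux3.sameBlock_classes st).mpr (st.refl' a))).symm
        · rcases hx01 s(a, b) (by simp [hab]) with h0 | h1
          · rw [h0]
            exact (LMCAux3.multicutVec_top_eq_zero (Setoid.isPartition_classes st)
              ((LMCAux3.sameBlock_classes st).mpr h0)).symm
          · rw [h1]
            refine (LMCAux3.multicutVec_top_eq_one (Setoid.isPartition_classes st) hab ?_).symm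
            intro hs
            have := (LMCAux3.sameBlock_classes st).mp hs
            rw [this] at h1
            norm_num at h1
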